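/- Let h(θ,v) be smooth on ℝ², 2π-periodic in θ, set H(t,x₁,x₂;θ) = h(θ, t + x₁cos θ + x₂ sin θ) with Fourier coefficients H_k, let u = H₀ (so u = Rh), and define η(t,x₁,x₂;ω) = H₀ + 2Σ_{k≥1} H_k ω^k for ω in the closed unit disk. Then η is well defined (the series converges together with all (t,x₁,x₂)-derivatives) and satisfies the identities (−∂_t + 2ω∂_z)η = −∂_t u − 2ω∂_z u and (−ω∂_t + 2∂_{z̄})η = ω∂_t u + 2∂_{z̄} u, where ∂_z = (∂_{x₁} − i∂_{x₂})/2 and ∂_{z̄} = (∂_{x₁} + i∂_{x₂})/2. -/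

import Mathlib

open Real MeasureTheory intervalIntegral

noncomputable section
namespace Stmt16

def pd (W : ℝ × ℝ → ℝ) : ℝ × ℝ → ℝ := fun p => fderiv ℝ W p (0, 1)

lemma pd_contDiff {W : ℝ × ℝ → ℝ} (hW : ContDiff ℝ (⊤ : ℕ∞) W) : ContDiff ℝ (⊤ : ℕ∞) (pd W) :=
  (hW.fderiv_right (by simp)).clm_apply contDiff_const

lemma pd_hasDerivAt {W : ℝ × ℝ → ℝ} (hW : ContDiff ℝ (⊤ : ℕ∞) W) (x y : ℝ) :
    HasDerivAt (fun v => W (x, v)) (pd W (x, y)) y := by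
  have h1 : HasDerivAt (fun v : ℝ => ((x, v) : ℝ × ℝ)) ((0 : ℝ), (1 : ℝ)) y :=
    (hasDerivAt_const y x).prodMk (hasDerivAt_id y)
  exact ((hW.differentiable (by simp) (x, y)).hasFDerivAt.comp_hasDerivAt y h1)

lemma pd_periodic {W : ℝ × ℝ → ℝ} (hW : ContDiff ℝ (⊤ : ℕ∞) W) (c : ℝ × ℝ)
    (hp : ∀ p, W (p + c) = W p) (p : ℝ × ℝ) : pd W (p + c) = pd W p := by
  have h : HasFDerivAt (fun q => W (q + c)) (fderiv ℝ W (p + c)) p := by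
    have := ((hW.differentiable (by simp) (p + c)).hasFDerivAt.comp p
      ((hasFDerivAt_id p).add_const c))
    simpa [Function.comp_def] using this
  have h2 : (fun q => W (q + c)) = W := funext hp
  rw [h2] at h
  unfold pd
  rw [← h.fderiv]

/-- "Nice" functions: smooth jointly, 2π-periodic in the first variable. -/
def Nice (g : ℝ → ℝ → ℝ) : Prop :=
  ContDiff ℝ (⊤ : ℕ∞) (fun p : ℝ × ℝ => g p.1 p.2) ∧ ∀ θ v : ℝ, g (θ + 2 * π) v = g θ v

def dv (g : ℝ → ℝ → ℝ) : ℝ → ℝ → ℝ := fun θ v => pd (fun p : ℝ × ℝ => g p.1 p.2) (θ, v)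

lemma Nice.dv {g : ℝ → ℝ → ℝ} (hg : Nice g) : Nice (Stmt16.dv g) := by
  constructor
  · exact pd_contDiff hg.1
  · intro θ v
    have := pd_periodic hg.1 ((2 * π : ℝ), (0:ℝ)) (fun p => by simp [hg.2 p.1 p.2]) (θ, v)
    simpa [Stmt16.dv, Prod.ext_iff] using this

lemma dv_hasDerivAt {g : ℝ → ℝ → ℝ} (hg : Nice g) (θ v : ℝ) :
    HasDerivAt (fun w => g θ w) (dv g θ v) v :=
  pd_hasDerivAt hg.1 θ v

def opT (g : ℝ → ℝ → ℝ) : ℝ → ℝ → ℝ := dv g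
def opC (g : ℝ → ℝ → ℝ) : ℝ → ℝ → ℝ := fun θ v => dv g θ v * Real.cos θ
def opS (g : ℝ → ℝ → ℝ) : ℝ → ℝ → ℝ := fun θ v => dv g θ v * Real.sin θ

lemma Nice.opT {g : ℝ → ℝ → ℝ} (hg : Nice g) : Nice (Stmt16.opT g) := hg.dv

lemma Nice.opC {g : ℝ → ℝ → ℝ} (hg : Nice g) : Nice (Stmt16.opC g) := by
  refine ⟨hg.dv.1.mul (Real.contDiff_cos.comp contDiff_fst), fun θ v => ?_⟩
  simp [Stmt16.opC, hg.dv.2 θ v, Real.cos_add_two_pi]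

lemma Nice.opS {g : ℝ → ℝ → ℝ} (hg : Nice g) : Nice (Stmt16.opS g) := by
  refine ⟨hg.dv.1.mul (Real.contDiff_sin.comp contDiff_fst), fun θ v => ?_⟩
  simp [Stmt16.opS, hg.dv.2 θ v, Real.sin_add_two_pi]

lemma Nice.iterate {op : (ℝ → ℝ → ℝ) → (ℝ → ℝ → ℝ)}
    (hop : ∀ {g}, Nice g → Nice (op g)) {g : ℝ → ℝ → ℝ} (hg : Nice g) (n : ℕ) :
    Nice (op^[n] g) := by
  induction n generalizing g with
  | zero => simpa using hg
  | succ n ih => rw [Function.iterate_succ_apply]; exact ih (hop hg)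

def eexp (k : ℤ) (θ : ℝ) : ℂ := Complex.exp (-Complex.I * (k : ℂ) * (θ : ℂ))

lemma eexp_cont (k : ℤ) : Continuous (eexp k) := by unfold eexp; fun_prop

lemma eexp_norm (k : ℤ) (θ : ℝ) : ‖eexp k θ‖ = 1 := by
  unfold eexp
  rw [Complex.norm_exp]
  simp [Complex.mul_re]

lemma eexp_hasDerivAt (k : ℤ) (θ : ℝ) :
    HasDerivAt (eexp k) ((-Complex.I * (k:ℂ)) * eexp k θ) θ := by
  have h0 : HasDerivAt (fun z : ℂ => -Complex.I * (k:ℂ) * z)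
      (-Complex.I * (k:ℂ)) ((θ:ℝ):ℂ) := by
    simpa using (hasDerivAt_id ((θ:ℝ):ℂ)).const_mul (-Complex.I * (k:ℂ))
  have h1 := h0.cexp
  have h2 := h1.comp_ofReal
  exact h2.congr_deriv (by unfold eexp; ring)

lemma eexp_two_pi (k : ℤ) : eexp k (2*π) = 1 := by
  unfold eexp
  rw [show -Complex.I * (k:ℂ) * ((2*π : ℝ):ℂ) = (-k : ℤ) * (2 * π * Complex.I) by push_cast; ring]
  exact Complex.exp_int_mul_two_pi_mul_I (-k)

lemma eexp_zero (k : ℤ) : eexp k 0 = 1 := by simp [eexp]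

/-- integration by parts step -/
lemma ibp {G G' : ℝ → ℂ} (hG : ∀ θ, HasDerivAt G (G' θ) θ) (hc : Continuous G')
    (hper : G (2*π) = G 0) (k : ℤ) :
    ∫ θ in (0:ℝ)..(2*π), G' θ * eexp k θ
      = (Complex.I * (k:ℂ)) * ∫ θ in (0:ℝ)..(2*π), G θ * eexp k θ := by
  have hGc : Continuous G := by
    have : Differentiable ℝ G := fun θ => (hG θ).differentiableAt
    exact this.continuous
  have key : ∀ θ, HasDerivAt (fun θ => G θ * eexp k θ)
      (G' θ * eexp k θ + (-Complex.I * (k:ℂ)) * (G θ * eexp k θ)) θ := by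
    intro θ
    have := (hG θ).mul (eexp_hasDerivAt k θ)
    exact this.congr_deriv (by ring)
  have hint1 : IntervalIntegrable (fun θ => G' θ * eexp k θ) volume 0 (2*π) :=
    (hc.mul (eexp_cont k)).intervalIntegrable _ _
  have hint2 : IntervalIntegrable (fun θ => (-Complex.I * (k:ℂ)) * (G θ * eexp k θ))
      volume 0 (2*π) := (continuous_const.mul (hGc.mul (eexp_cont k))).intervalIntegrable _ _
  have h0 : (∫ θ in (0:ℝ)..(2*π), (G' θ * eexp k θ
      + (-Complex.I * (k:ℂ)) * (G θ * eexp k θ))) = 0 := by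
    rw [intervalIntegral.integral_eq_sub_of_hasDerivAt (fun θ _ => key θ)
      (hint1.add hint2)]
    rw [eexp_two_pi, eexp_zero, hper]
    ring
  rw [intervalIntegral.integral_add hint1 hint2, intervalIntegral.integral_const_mul] at h0
  have h3 := h0
  set X := ∫ θ in (0:ℝ)..(2*π), G' θ * eexp k θ
  set Y := ∫ θ in (0:ℝ)..(2*π), G θ * eexp k θ
  linear_combination h3

lemma hasDerivAt_param {g : ℝ → ℝ → ℝ} (hg : Nice g) (a b : ℝ → ℝ)
    (ha : Continuous a) (hb : Continuous b) (k : ℤ) (s₀ : ℝ) :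
    HasDerivAt
      (fun s => ∫ θ in (0:ℝ)..(2*π), ((g θ (b θ + s * a θ) : ℝ) : ℂ) * eexp k θ)
      (∫ θ in (0:ℝ)..(2*π), ((dv g θ (b θ + s₀ * a θ) * a θ : ℝ) : ℂ) * eexp k θ) s₀ := by
  have hgc : Continuous (fun p : ℝ × ℝ => g p.1 p.2) := hg.1.continuous
  have hdvc : Continuous (fun p : ℝ × ℝ => dv g p.1 p.2) := hg.dv.1.continuous
  -- the integrand family and its s-derivative
  set F : ℝ → ℝ → ℂ := fun s θ => ((g θ (b θ + s * a θ) : ℝ) : ℂ) * eexp k θ with hF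
  set F' : ℝ → ℝ → ℂ := fun s θ => ((dv g θ (b θ + s * a θ) * a θ : ℝ) : ℂ) * eexp k θ with hF'
  have hFc : ∀ s, Continuous (fun θ => F s θ) := by
    intro s
    apply Continuous.mul _ (eexp_cont k)
    exact Complex.continuous_ofReal.comp
      (hgc.comp (continuous_id.prodMk (hb.add ((continuous_const.mul ha)))))
  have hF'c : Continuous (fun q : ℝ × ℝ => F' q.1 q.2) := by
    apply Continuous.mul _ ((eexp_cont k).comp continuous_snd)
    apply Complex.continuous_ofReal.comp
    apply Continuous.mul _ (ha.comp continuous_snd)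
    exact hdvc.comp (continuous_snd.prodMk
      ((hb.comp continuous_snd).add (continuous_fst.mul (ha.comp continuous_snd))))
  -- bound on a compact set
  obtain ⟨C, hC⟩ := (isCompact_Icc.prod isCompact_Icc :
      IsCompact (Set.Icc (s₀-1) (s₀+1) ×ˢ Set.Icc (0:ℝ) (2*π))).exists_bound_of_continuousOn
      hF'c.continuousOn
  have hder : ∀ (s θ : ℝ), HasDerivAt (fun x => F x θ) (F' s θ) s := by
    intro s θ
    have hin : HasDerivAt (fun x : ℝ => b θ + x * a θ) (a θ) s := by
      simpa using ((hasDerivAt_id s).mul_const (a θ)).const_add (b θ)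
    have hout := (dv_hasDerivAt hg θ (b θ + s * a θ)).comp s hin
    have := (hout.ofReal_comp).mul_const (eexp k θ)
    simpa [hF, hF'] using this
  have h2π : (0:ℝ) ≤ 2*π := by positivity
  have := hasDerivAt_integral_of_dominated_loc_of_deriv_le (F := F) (F' := F')
    (x₀ := s₀) (s := Metric.ball s₀ 1) (a := 0) (b := 2*π) (μ := volume)
    (bound := fun _ => C) (Metric.ball_mem_nhds s₀ one_pos)
    (Filter.Eventually.of_forall fun s => (hFc s).aestronglyMeasurable)
    ((hFc s₀).intervalIntegrable _ _)
    ((hF'c.comp (continuous_const.prodMk continuous_id)).aestronglyMeasurable)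
    ?_ (intervalIntegrable_const) ?_
  · exact this.2
  · refine Filter.Eventually.of_forall fun θ hθ s hs => ?_
    have hθ' : θ ∈ Set.Icc (0:ℝ) (2*π) := by
      rw [Set.uIoc_of_le h2π] at hθ; exact Set.Ioc_subset_Icc_self hθ
    have hs' : s ∈ Set.Icc (s₀-1) (s₀+1) := by
      rw [Metric.mem_ball, Real.dist_eq, abs_lt] at hs
      constructor <;> linarith [hs.1, hs.2]
    exact hC (s, θ) ⟨hs', hθ'⟩
  · exact Filter.Eventually.of_forall fun θ _ s _ => hder s θ

def J (g : ℝ → ℝ → ℝ) (k : ℤ) (t x₁ x₂ : ℝ) : ℂ :=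
  ∫ θ in (0:ℝ)..(2*π),
    ((g θ (t + x₁ * Real.cos θ + x₂ * Real.sin θ) : ℝ) : ℂ) * eexp k θ

lemma hasDerivAt_J_t {g : ℝ → ℝ → ℝ} (hg : Nice g) (k : ℤ) (t x₁ x₂ : ℝ) :
    HasDerivAt (fun s => J g k s x₁ x₂) (J (opT g) k t x₁ x₂) t := by
  have h := hasDerivAt_param hg (fun _ => 1)
    (fun θ => x₁ * Real.cos θ + x₂ * Real.sin θ) continuous_const (by fun_prop) k t
  have e1 : ∀ s : ℝ, (∫ θ in (0:ℝ)..(2*π),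
      ((g θ ((x₁ * Real.cos θ + x₂ * Real.sin θ) + s * 1) : ℝ) : ℂ) * eexp k θ)
      = J g k s x₁ x₂ := by
    intro s; unfold J; congr 1; funext θ
    have : (x₁ * Real.cos θ + x₂ * Real.sin θ) + s * 1
        = s + x₁ * Real.cos θ + x₂ * Real.sin θ := by ring
    rw [this]
  have e2 : (∫ θ in (0:ℝ)..(2*π),
      ((dv g θ ((x₁ * Real.cos θ + x₂ * Real.sin θ) + t * 1) * 1 : ℝ) : ℂ) * eexp k θ)
      = J (opT g) k t x₁ x₂ := by
    unfold J opT; congr 1; funext θ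
    have : (x₁ * Real.cos θ + x₂ * Real.sin θ) + t * 1
        = t + x₁ * Real.cos θ + x₂ * Real.sin θ := by ring
    rw [this, mul_one]
  rw [← funext e1, ← e2]  -- adjust
  exact h

lemma hasDerivAt_J_x1 {g : ℝ → ℝ → ℝ} (hg : Nice g) (k : ℤ) (t x₁ x₂ : ℝ) :
    HasDerivAt (fun y => J g k t y x₂) (J (opC g) k t x₁ x₂) x₁ := by
  have h := hasDerivAt_param hg Real.cos
    (fun θ => t + x₂ * Real.sin θ) Real.continuous_cos (by fun_prop) k x₁
  have e1 : ∀ y : ℝ, (∫ θ in (0:ℝ)..(2*π),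
      ((g θ ((t + x₂ * Real.sin θ) + y * Real.cos θ) : ℝ) : ℂ) * eexp k θ)
      = J g k t y x₂ := by
    intro y; unfold J; congr 1; funext θ
    have : (t + x₂ * Real.sin θ) + y * Real.cos θ
        = t + y * Real.cos θ + x₂ * Real.sin θ := by ring
    rw [this]
  have e2 : (∫ θ in (0:ℝ)..(2*π),
      ((dv g θ ((t + x₂ * Real.sin θ) + x₁ * Real.cos θ) * Real.cos θ : ℝ) : ℂ) * eexp k θ)
      = J (opC g) k t x₁ x₂ := by
    unfold J opC; congr 1; funext θ
    have : (t + x₂ * Real.sin θ) + x₁ * Real.cos θ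
        = t + x₁ * Real.cos θ + x₂ * Real.sin θ := by ring
    rw [this]
  rw [← funext e1, ← e2]
  exact h

lemma hasDerivAt_J_x2 {g : ℝ → ℝ → ℝ} (hg : Nice g) (k : ℤ) (t x₁ x₂ : ℝ) :
    HasDerivAt (fun w => J g k t x₁ w) (J (opS g) k t x₁ x₂) x₂ := by
  have h := hasDerivAt_param hg Real.sin
    (fun θ => t + x₁ * Real.cos θ) Real.continuous_sin (by fun_prop) k x₂
  exact h

lemma niceIter {op : (ℝ → ℝ → ℝ) → (ℝ → ℝ → ℝ)}
    (hop : ∀ {g}, Nice g → Nice (op g)) {g : ℝ → ℝ → ℝ} (hg : Nice g) (n : ℕ) :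
    Nice (op^[n] g) := by
  induction n generalizing g with
  | zero => simpa using hg
  | succ n ih => rw [Function.iterate_succ_apply]; exact ih (hop hg)

lemma iter_x2 (k : ℤ) (s y : ℝ) (c : ℂ) :
    ∀ (l : ℕ) (g : ℝ → ℝ → ℝ), Nice g → ∀ w : ℝ,
      iteratedDeriv l (fun w' => c * J g k s y w') w = c * J (opS^[l] g) k s y w := by
  intro l
  induction l with
  | zero => intro g hg w; simp
  | succ l ih =>
    intro g hg w
    rw [iteratedDeriv_succ']
    have hd : deriv (fun w' => c * J g k s y w') = fun w' => c * J (opS g) k s y w' := by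
      funext w'
      exact ((hasDerivAt_J_x2 hg k s y w').const_mul c).deriv
    rw [hd, Function.iterate_succ_apply]
    exact ih (opS g) hg.opS w

lemma iter_x1 (k : ℤ) (s w : ℝ) (c : ℂ) :
    ∀ (l : ℕ) (g : ℝ → ℝ → ℝ), Nice g → ∀ y : ℝ,
      iteratedDeriv l (fun y' => c * J g k s y' w) y = c * J (opC^[l] g) k s y w := by
  intro l
  induction l with
  | zero => intro g hg y; simp
  | succ l ih =>
    intro g hg y
    rw [iteratedDeriv_succ']
    have hd : deriv (fun y' => c * J g k s y' w) = fun y' => c * J (opC g) k s y' w := by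
      funext y'
      exact ((hasDerivAt_J_x1 hg k s y' w).const_mul c).deriv
    rw [hd, Function.iterate_succ_apply]
    exact ih (opC g) hg.opC y

lemma iter_t (k : ℤ) (y w : ℝ) (c : ℂ) :
    ∀ (l : ℕ) (g : ℝ → ℝ → ℝ), Nice g → ∀ s : ℝ,
      iteratedDeriv l (fun s' => c * J g k s' y w) s = c * J (opT^[l] g) k s y w := by
  intro l
  induction l with
  | zero => intro g hg s; simp
  | succ l ih =>
    intro g hg s
    rw [iteratedDeriv_succ']
    have hd : deriv (fun s' => c * J g k s' y w) = fun s' => c * J (opT g) k s' y w := by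
      funext s'
      exact ((hasDerivAt_J_t hg k s' y w).const_mul c).deriv
    rw [hd, Function.iterate_succ_apply]
    exact ih (opT g) hg.opT s

lemma iter_all {g : ℝ → ℝ → ℝ} (hg : Nice g) (i j l : ℕ) (k : ℤ) (c : ℂ)
    (t x₁ x₂ : ℝ) :
    iteratedDeriv i (fun s => iteratedDeriv j (fun y => iteratedDeriv l
      (fun w => c * J g k s y w) x₂) x₁) t
    = c * J (opT^[i] (opC^[j] (opS^[l] g))) k t x₁ x₂ := by
  have h1 : ∀ s y : ℝ, iteratedDeriv l (fun w => c * J g k s y w) x₂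
      = c * J (opS^[l] g) k s y x₂ := fun s y => iter_x2 k s y c l g hg x₂
  simp only [h1]
  have hg1 : Nice (opS^[l] g) := niceIter (fun h => h.opS) hg l
  have h2 : ∀ s : ℝ, iteratedDeriv j (fun y => c * J (opS^[l] g) k s y x₂) x₁
      = c * J (opC^[j] (opS^[l] g)) k s x₁ x₂ := fun s => iter_x1 k s x₂ c j _ hg1 x₁
  simp only [h2]
  exact iter_t k x₁ x₂ c i _ (niceIter (fun h => h.opC) hg1 j) t

/-- Uniform Fourier decay of the parametrized integrals. -/
lemma decay {g : ℝ → ℝ → ℝ} (hg : Nice g) (a b : ℝ → ℝ)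
    (ha : ContDiff ℝ (⊤ : ℕ∞) a) (hb : ContDiff ℝ (⊤ : ℕ∞) b)
    (hap : ∀ θ, a (θ + 2*π) = a θ) (hbp : ∀ θ, b (θ + 2*π) = b θ) (s₀ : ℝ) :
    ∃ C : ℝ, 0 ≤ C ∧ ∀ s ∈ Set.Icc (s₀ - 2) (s₀ + 2), ∀ k : ℤ, 1 ≤ k →
      ‖∫ θ in (0:ℝ)..(2*π), ((g θ (b θ + s * a θ) : ℝ) : ℂ) * eexp k θ‖
        ≤ C / (k:ℝ)^2 := by
  set W : ℝ × ℝ → ℝ := fun p => g p.2 (b p.2 + p.1 * a p.2) with hWdef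
  have hW : ContDiff ℝ (⊤ : ℕ∞) W :=
    hg.1.comp (contDiff_snd.prodMk ((hb.comp contDiff_snd).add
      (contDiff_fst.mul (ha.comp contDiff_snd))))
  have hWper : ∀ p : ℝ × ℝ, W (p + ((0:ℝ), (2*π:ℝ))) = W p := by
    intro p
    show g (p.2 + 2*π) (b (p.2 + 2*π) + (p.1 + 0) * a (p.2 + 2*π)) = _
    rw [hap, hbp, add_zero, hg.2]
  set W1 := pd W with hW1def
  have hW1 : ContDiff ℝ (⊤ : ℕ∞) W1 := pd_contDiff hW
  have hW1per : ∀ p : ℝ × ℝ, W1 (p + ((0:ℝ), (2*π:ℝ))) = W1 p :=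
    fun p => pd_periodic hW _ hWper p
  set W2 := pd W1 with hW2def
  have hW2 : ContDiff ℝ (⊤ : ℕ∞) W2 := pd_contDiff hW1
  -- compact bound
  obtain ⟨C₀, hC₀⟩ := (isCompact_Icc.prod isCompact_Icc :
      IsCompact (Set.Icc (s₀-2) (s₀+2) ×ˢ Set.Icc (0:ℝ) (2*π))).exists_bound_of_continuousOn
      (hW2.continuous.continuousOn)
  have hπ : (0:ℝ) < π := Real.pi_pos
  have hC₀0 : 0 ≤ C₀ := le_trans (norm_nonneg _) (hC₀ (s₀, 0)
    ⟨⟨by linarith, by linarith⟩, ⟨le_refl 0, by positivity⟩⟩)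
  refine ⟨2*π*C₀, by positivity, ?_⟩
  intro s hs k hk
  set G : ℝ → ℂ := fun θ => ((W (s, θ) : ℝ) : ℂ) with hGdef
  set G1 : ℝ → ℂ := fun θ => ((W1 (s, θ) : ℝ) : ℂ) with hG1def
  set G2 : ℝ → ℂ := fun θ => ((W2 (s, θ) : ℝ) : ℂ) with hG2def
  have hGd : ∀ θ, HasDerivAt G (G1 θ) θ := fun θ => (pd_hasDerivAt hW s θ).ofReal_comp
  have hG1d : ∀ θ, HasDerivAt G1 (G2 θ) θ := fun θ => (pd_hasDerivAt hW1 s θ).ofReal_comp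
  have hG1c : Continuous G1 := by
    apply Complex.continuous_ofReal.comp
    exact hW1.continuous.comp (continuous_const.prodMk continuous_id)
  have hG2c : Continuous G2 := by
    apply Complex.continuous_ofReal.comp
    exact hW2.continuous.comp (continuous_const.prodMk continuous_id)
  have hGper : G (2*π) = G 0 := by
    have := hWper (s, 0)
    simp only [Prod.mk_add_mk, add_zero, zero_add] at this
    rw [hGdef]; simp [this]
  have hG1per : G1 (2*π) = G1 0 := by
    have := hW1per (s, 0)
    simp only [Prod.mk_add_mk, add_zero, zero_add] at this
    rw [hG1def]; simp [this]
  have e1 := ibp hGd hG1c hGper k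
  have e2 := ibp hG1d hG2c hG1per k
  -- (I k)^2 * ∫ G e = ∫ G2 e
  have key : (Complex.I * (k:ℂ))^2 * (∫ θ in (0:ℝ)..(2*π), G θ * eexp k θ)
      = ∫ θ in (0:ℝ)..(2*π), G2 θ * eexp k θ := by
    rw [e2, e1]; ring
  have hb2 : ‖∫ θ in (0:ℝ)..(2*π), G2 θ * eexp k θ‖ ≤ C₀ * |2*π - 0| := by
    apply intervalIntegral.norm_integral_le_of_norm_le_const
    intro θ hθ
    rw [Set.uIoc_of_le (by positivity)] at hθ
    have hθ' : θ ∈ Set.Icc (0:ℝ) (2*π) := Set.Ioc_subset_Icc_self hθ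
    rw [norm_mul, eexp_norm, mul_one]
    have := hC₀ (s, θ) ⟨hs, hθ'⟩
    simpa [hG2def] using this
  have hk0 : (0:ℝ) < (k:ℝ) := by exact_mod_cast hk
  have hknorm : ‖(Complex.I * (k:ℂ))^2‖ = (k:ℝ)^2 := by
    rw [norm_pow, norm_mul, Complex.norm_I, one_mul]
    norm_num
  have hfin : (k:ℝ)^2 * ‖∫ θ in (0:ℝ)..(2*π), G θ * eexp k θ‖ ≤ 2*π*C₀ := by
    rw [← hknorm, ← norm_mul, key]
    calc ‖∫ θ in (0:ℝ)..(2*π), G2 θ * eexp k θ‖ ≤ C₀ * |2*π - 0| := hb2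
      _ = 2*π*C₀ := by rw [sub_zero, abs_of_pos (by positivity)]; ring
  have hgoal : (∫ θ in (0:ℝ)..(2*π), ((g θ (b θ + s * a θ) : ℝ) : ℂ) * eexp k θ)
      = ∫ θ in (0:ℝ)..(2*π), G θ * eexp k θ := rfl
  rw [hgoal, le_div_iff₀ (by positivity : (0:ℝ) < (k:ℝ)^2)]
  calc ‖∫ θ in (0:ℝ)..(2*π), G θ * eexp k θ‖ * (k:ℝ)^2
      = (k:ℝ)^2 * ‖∫ θ in (0:ℝ)..(2*π), G θ * eexp k θ‖ := mul_comm _ _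
    _ ≤ 2*π*C₀ := hfin


lemma decay_J_t {g : ℝ → ℝ → ℝ} (hg : Nice g) (t₀ x₁ x₂ : ℝ) :
    ∃ C : ℝ, 0 ≤ C ∧ ∀ s ∈ Set.Icc (t₀ - 2) (t₀ + 2), ∀ k : ℤ, 1 ≤ k →
      ‖J g k s x₁ x₂‖ ≤ C / (k:ℝ)^2 := by
  obtain ⟨C, hC0, hC⟩ := decay hg (fun _ => 1)
    (fun θ => x₁ * Real.cos θ + x₂ * Real.sin θ) contDiff_const
    ((contDiff_const.mul Real.contDiff_cos).add (contDiff_const.mul Real.contDiff_sin))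
    (fun θ => rfl)
    (fun θ => by simp only [Real.cos_add_two_pi, Real.sin_add_two_pi]) t₀
  refine ⟨C, hC0, fun s hs k hk => ?_⟩
  have e : J g k s x₁ x₂ = ∫ θ in (0:ℝ)..(2*π),
      ((g θ ((x₁ * Real.cos θ + x₂ * Real.sin θ) + s * 1) : ℝ) : ℂ) * eexp k θ := by
    unfold J; congr 1; funext θ
    have : (x₁ * Real.cos θ + x₂ * Real.sin θ) + s * 1
        = s + x₁ * Real.cos θ + x₂ * Real.sin θ := by ring
    rw [this]
  rw [e]; exact hC s hs k hk

lemma decay_J_x1 {g : ℝ → ℝ → ℝ} (hg : Nice g) (t y₀ x₂ : ℝ) :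
    ∃ C : ℝ, 0 ≤ C ∧ ∀ y ∈ Set.Icc (y₀ - 2) (y₀ + 2), ∀ k : ℤ, 1 ≤ k →
      ‖J g k t y x₂‖ ≤ C / (k:ℝ)^2 := by
  obtain ⟨C, hC0, hC⟩ := decay hg Real.cos
    (fun θ => t + x₂ * Real.sin θ) Real.contDiff_cos
    (contDiff_const.add (contDiff_const.mul Real.contDiff_sin))
    (fun θ => Real.cos_add_two_pi θ)
    (fun θ => by simp only [Real.sin_add_two_pi]) y₀
  refine ⟨C, hC0, fun y hy k hk => ?_⟩
  have e : J g k t y x₂ = ∫ θ in (0:ℝ)..(2*π),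
      ((g θ ((t + x₂ * Real.sin θ) + y * Real.cos θ) : ℝ) : ℂ) * eexp k θ := by
    unfold J; congr 1; funext θ
    have : (t + x₂ * Real.sin θ) + y * Real.cos θ
        = t + y * Real.cos θ + x₂ * Real.sin θ := by ring
    rw [this]
  rw [e]; exact hC y hy k hk

lemma decay_J_x2 {g : ℝ → ℝ → ℝ} (hg : Nice g) (t x₁ w₀ : ℝ) :
    ∃ C : ℝ, 0 ≤ C ∧ ∀ w ∈ Set.Icc (w₀ - 2) (w₀ + 2), ∀ k : ℤ, 1 ≤ k →
      ‖J g k t x₁ w‖ ≤ C / (k:ℝ)^2 := by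
  obtain ⟨C, hC0, hC⟩ := decay hg Real.sin
    (fun θ => t + x₁ * Real.cos θ) Real.contDiff_sin
    (contDiff_const.add (contDiff_const.mul Real.contDiff_cos))
    (fun θ => Real.sin_add_two_pi θ)
    (fun θ => by simp only [Real.cos_add_two_pi]) w₀
  exact ⟨C, hC0, fun w hw k hk => hC w hw k hk⟩

lemma J_zero_real (g : ℝ → ℝ → ℝ) (t x₁ x₂ : ℝ) :
    J g 0 t x₁ x₂
      = ((∫ θ in (0:ℝ)..(2*π), g θ (t + x₁ * Real.cos θ + x₂ * Real.sin θ) : ℝ) : ℂ) := by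
  unfold J
  have he : ∀ θ : ℝ, eexp 0 θ = 1 := fun θ => by simp [eexp]
  simp only [he, mul_one]
  exact intervalIntegral.integral_ofReal

lemma J_integrand_continuous {g : ℝ → ℝ → ℝ} (hg : Nice g) (k : ℤ) (t x₁ x₂ : ℝ) :
    Continuous (fun θ : ℝ =>
      ((g θ (t + x₁ * Real.cos θ + x₂ * Real.sin θ) : ℝ) : ℂ) * eexp k θ) := by
  apply Continuous.mul _ (eexp_cont k)
  apply Complex.continuous_ofReal.comp
  exact hg.1.continuous.comp (continuous_id.prodMk (by fun_prop))

lemma exp_neg_theta (z : ℂ) :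
    Complex.cos z - Complex.I * Complex.sin z = Complex.exp (-z * Complex.I) := by
  rw [Complex.exp_mul_I, Complex.cos_neg, Complex.sin_neg]
  ring

lemma exp_pos_theta (z : ℂ) :
    Complex.cos z + Complex.I * Complex.sin z = Complex.exp (z * Complex.I) := by
  rw [Complex.exp_mul_I]
  ring

lemma J_shift {g : ℝ → ℝ → ℝ} (hg : Nice g) (k : ℤ) (t x₁ x₂ : ℝ) :
    J (opC g) k t x₁ x₂ - Complex.I * J (opS g) k t x₁ x₂ = J (opT g) (k+1) t x₁ x₂ := by
  unfold J
  rw [← intervalIntegral.integral_const_mul,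
    ← intervalIntegral.integral_sub (J_integrand_continuous hg.opC k t x₁ x₂
        |>.intervalIntegrable _ _)
      (((J_integrand_continuous hg.opS k t x₁ x₂).intervalIntegrable _ _).const_mul Complex.I)]
  apply intervalIntegral.integral_congr
  intro θ _
  show ((opC g θ _ : ℝ):ℂ) * eexp k θ - Complex.I * (((opS g θ _ : ℝ):ℂ) * eexp k θ) = _
  unfold opC opS opT
  have key : Complex.exp (-(θ:ℂ) * Complex.I) * eexp k θ = eexp (k+1) θ := by
    unfold eexp
    rw [← Complex.exp_add]
    congr 1
    push_cast
    ring
  push_cast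
  rw [← key, ← exp_neg_theta]
  push_cast
  ring

lemma J_shift' {g : ℝ → ℝ → ℝ} (hg : Nice g) (k : ℤ) (t x₁ x₂ : ℝ) :
    J (opC g) k t x₁ x₂ + Complex.I * J (opS g) k t x₁ x₂ = J (opT g) (k-1) t x₁ x₂ := by
  unfold J
  rw [← intervalIntegral.integral_const_mul,
    ← intervalIntegral.integral_add (J_integrand_continuous hg.opC k t x₁ x₂
        |>.intervalIntegrable _ _)
      (((J_integrand_continuous hg.opS k t x₁ x₂).intervalIntegrable _ _).const_mul Complex.I)]
  apply intervalIntegral.integral_congr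
  intro θ _
  show ((opC g θ _ : ℝ):ℂ) * eexp k θ + Complex.I * (((opS g θ _ : ℝ):ℂ) * eexp k θ) = _
  unfold opC opS opT
  have key : Complex.exp ((θ:ℂ) * Complex.I) * eexp k θ = eexp (k-1) θ := by
    unfold eexp
    rw [← Complex.exp_add]
    congr 1
    push_cast
    ring
  push_cast
  rw [← key, ← exp_pos_theta]
  push_cast
  ring

lemma summable_bound (C : ℝ) : Summable (fun n : ℕ => C / ((n:ℝ)+1)^2) := by
  have h1 : Summable (fun n : ℕ => 1 / ((n:ℝ))^2) :=
    summable_one_div_nat_pow.mpr one_lt_two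
  have h2 : Summable (fun n : ℕ => 1 / ((n:ℝ)+1)^2) := by
    have := (summable_nat_add_iff 1).mpr h1
    refine this.congr fun n => ?_
    push_cast
    ring_nf
  simpa [div_eq_mul_inv, mul_comm] using h2.mul_left C

lemma summable_pow_of_decay {A : ℕ → ℂ} {C : ℝ}
    (hA : ∀ n : ℕ, ‖A n‖ ≤ C / ((n:ℝ)+1)^2) {ω : ℂ} (hω : ‖ω‖ ≤ 1) :
    Summable (fun n => A n * ω^(n+1)) := by
  apply Summable.of_norm_bounded (summable_bound C)
  intro n
  rw [norm_mul, norm_pow]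
  calc ‖A n‖ * ‖ω‖^(n+1) ≤ (C / ((n:ℝ)+1)^2) * 1 := by
        apply mul_le_mul (hA n) (pow_le_one₀ (norm_nonneg _) hω)
          (by positivity) (le_trans (norm_nonneg _) (hA n))
    _ = C / ((n:ℝ)+1)^2 := mul_one _

lemma tsum_hasDerivAt {f f' : ℕ → ℝ → ℂ} {t₀ : ℝ} {C : ℝ}
    (hf : ∀ n s, HasDerivAt (f n) (f' n s) s)
    (hb : ∀ n, ∀ s ∈ Set.Icc (t₀-2) (t₀+2), ‖f' n s‖ ≤ C / ((n:ℝ)+1)^2)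
    (hs0 : Summable fun n => f n t₀) :
    HasDerivAt (fun s => ∑' n, f n s) (∑' n, f' n t₀) t₀ := by
  have ht0 : t₀ ∈ Set.Ioo (t₀-2) (t₀+2) := ⟨by linarith, by linarith⟩
  exact hasDerivAt_tsum_of_isPreconnected (summable_bound C) isOpen_Ioo
    ((convex_Ioo _ _).isPreconnected)
    (fun n y _ => hf n y)
    (fun n y hy => hb n y (Set.Ioo_subset_Icc_self hy))
    ht0 hs0 ht0


end Stmt16

end section

open Stmt16 in
/-- With `h` smooth and `2π`-periodic in `θ`, Fourier coefficients `Hc k` of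
`H(t,x₁,x₂;θ) = h(θ, t + x₁cos θ + x₂sin θ)`, `u = H₀ = Rh`, and
`η(t,x₁,x₂;ω) = H₀ + 2Σ_{k≥1} H_k ω^k` for `|ω| ≤ 1`: the series converges together with
all `(t,x₁,x₂)`-derivatives, and `(−∂_t + 2ω∂_z)η = −∂_t u − 2ω∂_z u`,
`(−ω∂_t + 2∂_{z̄})η = ω∂_t u + 2∂_{z̄}u`. -/
theorem stmt_16 (h : ℝ → ℝ → ℝ)
    (hsmooth : ContDiff ℝ (⊤ : ℕ∞) (fun p : ℝ × ℝ => h p.1 p.2))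
    (hper : ∀ θ v : ℝ, h (θ + 2 * π) v = h θ v)
    (Hc : ℤ → ℝ → ℝ → ℝ → ℂ)
    (hHc : ∀ (k : ℤ) (t x₁ x₂ : ℝ), Hc k t x₁ x₂ =
      (1 / (2 * (π : ℂ))) * ∫ θ in (0:ℝ)..(2 * π),
        ((h θ (t + x₁ * Real.cos θ + x₂ * Real.sin θ) : ℝ) : ℂ) *
          Complex.exp (-Complex.I * (k : ℂ) * (θ : ℂ)))
    (u : ℝ → ℝ → ℝ → ℝ)
    (hu : ∀ t x₁ x₂ : ℝ, u t x₁ x₂ =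
      (1 / (2 * π)) * ∫ θ in (0:ℝ)..(2 * π), h θ (t + x₁ * Real.cos θ + x₂ * Real.sin θ))
    (η : ℝ → ℝ → ℝ → ℂ → ℂ)
    (hη : ∀ (t x₁ x₂ : ℝ) (ω : ℂ), η t x₁ x₂ ω =
      Hc 0 t x₁ x₂ + 2 * ∑' n : ℕ, Hc ((n : ℤ) + 1) t x₁ x₂ * ω ^ (n + 1)) :
    (∀ (t x₁ x₂ : ℝ) (ω : ℂ), ‖ω‖ ≤ 1 → ∀ i j l : ℕ,
      Summable (fun n : ℕ =>
        iteratedDeriv i (fun s => iteratedDeriv j (fun y => iteratedDeriv l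
          (fun w => Hc ((n : ℤ) + 1) s y w) x₂) x₁) t * ω ^ (n + 1))) ∧
    (∀ (t x₁ x₂ : ℝ) (ω : ℂ), ‖ω‖ ≤ 1 →
      (-deriv (fun s => η s x₁ x₂ ω) t
          + 2 * ω * ((deriv (fun y => η t y x₂ ω) x₁
            - Complex.I * deriv (fun w => η t x₁ w ω) x₂) / 2) =
        -((deriv (fun s => u s x₁ x₂) t : ℝ) : ℂ)
          - 2 * ω * ((((deriv (fun y => u t y x₂) x₁ : ℝ) : ℂ)
            - Complex.I * ((deriv (fun w => u t x₁ w) x₂ : ℝ) : ℂ)) / 2)) ∧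
      (-ω * deriv (fun s => η s x₁ x₂ ω) t
          + 2 * ((deriv (fun y => η t y x₂ ω) x₁
            + Complex.I * deriv (fun w => η t x₁ w ω) x₂) / 2) =
        ω * ((deriv (fun s => u s x₁ x₂) t : ℝ) : ℂ)
          + 2 * ((((deriv (fun y => u t y x₂) x₁ : ℝ) : ℂ)
            + Complex.I * ((deriv (fun w => u t x₁ w) x₂ : ℝ) : ℂ)) / 2))) := by
  have hg0 : Nice h := ⟨hsmooth, hper⟩
  have hHc' : ∀ (k : ℤ) (s y w : ℝ), Hc k s y w
      = (1 / (2 * (π:ℂ))) * J h k s y w := by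
    intro k s y w; rw [hHc]; rfl
  have hπ : (0:ℝ) < π := Real.pi_pos
  have hbd : ∀ (g : ℝ → ℝ → ℝ), Nice g → ∀ t' y' w' : ℝ, ∃ C : ℝ, 0 ≤ C ∧
      ∀ n : ℕ, ‖(1 / (2 * (π:ℂ))) * J g ((n:ℤ)+1) t' y' w'‖ ≤ C / ((n:ℝ)+1)^2 := by
    intro g hg t' y' w'
    obtain ⟨C, hC0, hC⟩ := decay_J_t hg t' y' w'
    refine ⟨‖(1 / (2 * (π:ℂ)))‖ * C, by positivity, fun n => ?_⟩
    have h1 := hC t' ⟨by linarith, by linarith⟩ ((n:ℤ)+1) (by omega)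
    push_cast at h1
    rw [norm_mul]
    calc ‖(1 / (2 * (π:ℂ)))‖ * ‖J g ((n:ℤ)+1) t' y' w'‖
        ≤ ‖(1 / (2 * (π:ℂ)))‖ * (C / ((n:ℝ)+1)^2) := by gcongr
      _ = ‖(1 / (2 * (π:ℂ)))‖ * C / ((n:ℝ)+1)^2 := by ring
  constructor
  · -- Part 1 : summability of all derived series
    intro t x₁ x₂ ω hω i j l
    have hω' : ‖ω‖ ≤ 1 := hω
    have hGnice : Nice (opT^[i] (opC^[j] (opS^[l] h))) :=
      niceIter (fun hh => hh.opT)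
        (niceIter (fun hh => hh.opC) (niceIter (fun hh => hh.opS) hg0 l) j) i
    have hterm : ∀ n : ℕ,
        iteratedDeriv i (fun s => iteratedDeriv j (fun y => iteratedDeriv l
          (fun w => Hc ((n : ℤ) + 1) s y w) x₂) x₁) t
        = (1 / (2 * (π:ℂ))) * J (opT^[i] (opC^[j] (opS^[l] h))) ((n:ℤ)+1) t x₁ x₂ := by
      intro n
      simp only [hHc']
      exact iter_all hg0 i j l ((n:ℤ)+1) (1 / (2 * (π:ℂ))) t x₁ x₂
    obtain ⟨C, hC0, hC⟩ := hbd _ hGnice t x₁ x₂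
    have hsum : Summable (fun n : ℕ =>
        ((1 / (2 * (π:ℂ))) * J (opT^[i] (opC^[j] (opS^[l] h))) ((n:ℤ)+1) t x₁ x₂)
          * ω^(n+1)) := summable_pow_of_decay hC hω'
    refine hsum.congr fun n => ?_
    rw [hterm n]
  · -- Part 2 : the two identities
    intro t x₁ x₂ ω hω
    have hω' : ‖ω‖ ≤ 1 := hω
    set A : ℤ → ℂ := fun k => (1 / (2 * (π:ℂ))) * J (opT h) k t x₁ x₂ with hAdef
    set Z1 : ℤ → ℂ := fun k => (1 / (2 * (π:ℂ))) * J (opC h) k t x₁ x₂ with hZ1def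
    set Z2 : ℤ → ℂ := fun k => (1 / (2 * (π:ℂ))) * J (opS h) k t x₁ x₂ with hZ2def
    -- summability of the coefficient series
    have hCA' : ∃ C, 0 ≤ C ∧ ∀ n : ℕ, ‖A ((n:ℤ)+1)‖ ≤ C / ((n:ℝ)+1)^2 := by
      obtain ⟨C, h0, hC⟩ := hbd _ hg0.opT t x₁ x₂
      exact ⟨C, h0, fun n => hC n⟩
    have hCZ1' : ∃ C, 0 ≤ C ∧ ∀ n : ℕ, ‖Z1 ((n:ℤ)+1)‖ ≤ C / ((n:ℝ)+1)^2 := by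
      obtain ⟨C, h0, hC⟩ := hbd _ hg0.opC t x₁ x₂
      exact ⟨C, h0, fun n => hC n⟩
    have hCZ2' : ∃ C, 0 ≤ C ∧ ∀ n : ℕ, ‖Z2 ((n:ℤ)+1)‖ ≤ C / ((n:ℝ)+1)^2 := by
      obtain ⟨C, h0, hC⟩ := hbd _ hg0.opS t x₁ x₂
      exact ⟨C, h0, fun n => hC n⟩
    obtain ⟨CA, hCA0, hCA⟩ := hCA'
    obtain ⟨CZ1, hCZ10, hCZ1⟩ := hCZ1'
    obtain ⟨CZ2, hCZ20, hCZ2⟩ := hCZ2'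
    have SAs : Summable (fun n : ℕ => A ((n:ℤ)+1) * ω^(n+1)) :=
      summable_pow_of_decay hCA hω'
    have SZ1s : Summable (fun n : ℕ => Z1 ((n:ℤ)+1) * ω^(n+1)) :=
      summable_pow_of_decay hCZ1 hω'
    have SZ2s : Summable (fun n : ℕ => Z2 ((n:ℤ)+1) * ω^(n+1)) :=
      summable_pow_of_decay hCZ2 hω'
    have SUs : Summable (fun n : ℕ => A (n:ℤ) * ω^(n+1)) := by
      rw [← summable_nat_add_iff 1]
      refine (SAs.mul_right ω).congr fun n => ?_
      have hc1 : (((n+1:ℕ)):ℤ) = (n:ℤ)+1 := by push_cast; ring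
      rw [hc1]
      ring
    -- summability of the η series at the base point, for each nice g
    have hbase : ∀ (g : ℝ → ℝ → ℝ), Nice g →
        Summable (fun n : ℕ => ((1 / (2 * (π:ℂ))) * J g ((n:ℤ)+1) t x₁ x₂) * ω^(n+1)) := by
      intro g hg
      obtain ⟨C, h0, hC⟩ := hbd g hg t x₁ x₂
      exact summable_pow_of_decay hC hω'
    -- derivative of η in t
    have hηt : HasDerivAt (fun s => η s x₁ x₂ ω)
        (A 0 + 2 * ∑' n : ℕ, A ((n:ℤ)+1) * ω^(n+1)) t := by
      have heq : (fun s => η s x₁ x₂ ω) = fun s =>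
          (1 / (2 * (π:ℂ))) * J h 0 s x₁ x₂
            + 2 * ∑' n : ℕ, ((1 / (2 * (π:ℂ))) * J h ((n:ℤ)+1) s x₁ x₂) * ω^(n+1) := by
        funext s; rw [hη]; simp only [hHc']
      rw [heq]
      apply HasDerivAt.add
      · exact (hasDerivAt_J_t hg0 0 t x₁ x₂).const_mul _
      · refine HasDerivAt.const_mul 2 ?_
        obtain ⟨C, hC0, hC⟩ := decay_J_t hg0.opT t x₁ x₂
        apply tsum_hasDerivAt (f' := fun n s => ((1 / (2 * (π:ℂ))) * J (opT h) ((n:ℤ)+1) s x₁ x₂) * ω^(n+1)) (C := ‖(1 / (2 * (π:ℂ)))‖ * C)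
        · intro n s
          exact ((hasDerivAt_J_t hg0 ((n:ℤ)+1) s x₁ x₂).const_mul _).mul_const _
        · intro n s hs
          have h1 := hC s hs ((n:ℤ)+1) (by omega)
          push_cast at h1
          rw [norm_mul, norm_mul, norm_pow]
          calc ‖(1 / (2 * (π:ℂ)))‖ * ‖J (opT h) ((n:ℤ)+1) s x₁ x₂‖ * ‖ω‖^(n+1)
              ≤ ‖(1 / (2 * (π:ℂ)))‖ * (C / ((n:ℝ)+1)^2) * 1 := by
                gcongr
                exact pow_le_one₀ (norm_nonneg _) hω'
            _ = ‖(1 / (2 * (π:ℂ)))‖ * C / ((n:ℝ)+1)^2 := by ring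
        · exact hbase h hg0
    -- derivative of η in x₁
    have hη1 : HasDerivAt (fun y => η t y x₂ ω)
        (Z1 0 + 2 * ∑' n : ℕ, Z1 ((n:ℤ)+1) * ω^(n+1)) x₁ := by
      have heq : (fun y => η t y x₂ ω) = fun y =>
          (1 / (2 * (π:ℂ))) * J h 0 t y x₂
            + 2 * ∑' n : ℕ, ((1 / (2 * (π:ℂ))) * J h ((n:ℤ)+1) t y x₂) * ω^(n+1) := by
        funext y; rw [hη]; simp only [hHc']
      rw [heq]
      apply HasDerivAt.add
      · exact (hasDerivAt_J_x1 hg0 0 t x₁ x₂).const_mul _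
      · refine HasDerivAt.const_mul 2 ?_
        obtain ⟨C, hC0, hC⟩ := decay_J_x1 hg0.opC t x₁ x₂
        apply tsum_hasDerivAt (f' := fun n y => ((1 / (2 * (π:ℂ))) * J (opC h) ((n:ℤ)+1) t y x₂) * ω^(n+1)) (C := ‖(1 / (2 * (π:ℂ)))‖ * C)
        · intro n y
          exact ((hasDerivAt_J_x1 hg0 ((n:ℤ)+1) t y x₂).const_mul _).mul_const _
        · intro n y hy
          have h1 := hC y hy ((n:ℤ)+1) (by omega)
          push_cast at h1
          rw [norm_mul, norm_mul, norm_pow]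
          calc ‖(1 / (2 * (π:ℂ)))‖ * ‖J (opC h) ((n:ℤ)+1) t y x₂‖ * ‖ω‖^(n+1)
              ≤ ‖(1 / (2 * (π:ℂ)))‖ * (C / ((n:ℝ)+1)^2) * 1 := by
                gcongr
                exact pow_le_one₀ (norm_nonneg _) hω'
            _ = ‖(1 / (2 * (π:ℂ)))‖ * C / ((n:ℝ)+1)^2 := by ring
        · exact hbase h hg0
    -- derivative of η in x₂
    have hη2 : HasDerivAt (fun w => η t x₁ w ω)
        (Z2 0 + 2 * ∑' n : ℕ, Z2 ((n:ℤ)+1) * ω^(n+1)) x₂ := by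
      have heq : (fun w => η t x₁ w ω) = fun w =>
          (1 / (2 * (π:ℂ))) * J h 0 t x₁ w
            + 2 * ∑' n : ℕ, ((1 / (2 * (π:ℂ))) * J h ((n:ℤ)+1) t x₁ w) * ω^(n+1) := by
        funext w; rw [hη]; simp only [hHc']
      rw [heq]
      apply HasDerivAt.add
      · exact (hasDerivAt_J_x2 hg0 0 t x₁ x₂).const_mul _
      · refine HasDerivAt.const_mul 2 ?_
        obtain ⟨C, hC0, hC⟩ := decay_J_x2 hg0.opS t x₁ x₂
        apply tsum_hasDerivAt (f' := fun n w => ((1 / (2 * (π:ℂ))) * J (opS h) ((n:ℤ)+1) t x₁ w) * ω^(n+1)) (C := ‖(1 / (2 * (π:ℂ)))‖ * C)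
        · intro n w
          exact ((hasDerivAt_J_x2 hg0 ((n:ℤ)+1) t x₁ w).const_mul _).mul_const _
        · intro n w hw
          have h1 := hC w hw ((n:ℤ)+1) (by omega)
          push_cast at h1
          rw [norm_mul, norm_mul, norm_pow]
          calc ‖(1 / (2 * (π:ℂ)))‖ * ‖J (opS h) ((n:ℤ)+1) t x₁ w‖ * ‖ω‖^(n+1)
              ≤ ‖(1 / (2 * (π:ℂ)))‖ * (C / ((n:ℝ)+1)^2) * 1 := by
                gcongr
                exact pow_le_one₀ (norm_nonneg _) hω'
            _ = ‖(1 / (2 * (π:ℂ)))‖ * C / ((n:ℝ)+1)^2 := by ring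
        · exact hbase h hg0
    have hDt : deriv (fun s => η s x₁ x₂ ω) t
        = A 0 + 2 * ∑' n : ℕ, A ((n:ℤ)+1) * ω^(n+1) := hηt.deriv
    have hD1 : deriv (fun y => η t y x₂ ω) x₁
        = Z1 0 + 2 * ∑' n : ℕ, Z1 ((n:ℤ)+1) * ω^(n+1) := hη1.deriv
    have hD2 : deriv (fun w => η t x₁ w ω) x₂
        = Z2 0 + 2 * ∑' n : ℕ, Z2 ((n:ℤ)+1) * ω^(n+1) := hη2.deriv
    -- derivatives of u
    have hu_t : ((deriv (fun s => u s x₁ x₂) t : ℝ) : ℂ) = A 0 := by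
      have hcoe : ∀ s, ((u s x₁ x₂ : ℝ) : ℂ) = (1 / (2 * (π:ℂ))) * J h 0 s x₁ x₂ := by
        intro s
        rw [hu, J_zero_real]
        push_cast
        ring
      obtain ⟨ar, har⟩ : ∃ ar : ℝ, A 0 = (ar : ℂ) := by
        refine ⟨(1/(2*π)) * ∫ θ in (0:ℝ)..(2*π),
          opT h θ (t + x₁ * Real.cos θ + x₂ * Real.sin θ), ?_⟩
        show (1 / (2 * (π:ℂ))) * J (opT h) 0 t x₁ x₂ = _
        rw [J_zero_real]
        push_cast
        ring
      have hdC : HasDerivAt (fun s => ((u s x₁ x₂ : ℝ) : ℂ)) (A 0) t := by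
        simp only [hcoe]
        exact (hasDerivAt_J_t hg0 0 t x₁ x₂).const_mul _
      have hdR : HasDerivAt (fun s => u s x₁ x₂) ar t := by
        have h2 := Complex.reCLM.hasFDerivAt.comp_hasDerivAt t hdC
        rw [har] at h2
        simpa [Function.comp_def] using h2
      rw [hdR.deriv, ← har]
    have hu_1 : ((deriv (fun y => u t y x₂) x₁ : ℝ) : ℂ) = Z1 0 := by
      have hcoe : ∀ y, ((u t y x₂ : ℝ) : ℂ) = (1 / (2 * (π:ℂ))) * J h 0 t y x₂ := by
        intro y
        rw [hu, J_zero_real]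
        push_cast
        ring
      obtain ⟨ar, har⟩ : ∃ ar : ℝ, Z1 0 = (ar : ℂ) := by
        refine ⟨(1/(2*π)) * ∫ θ in (0:ℝ)..(2*π),
          opC h θ (t + x₁ * Real.cos θ + x₂ * Real.sin θ), ?_⟩
        show (1 / (2 * (π:ℂ))) * J (opC h) 0 t x₁ x₂ = _
        rw [J_zero_real]
        push_cast
        ring
      have hdC : HasDerivAt (fun y => ((u t y x₂ : ℝ) : ℂ)) (Z1 0) x₁ := by
        simp only [hcoe]
        exact (hasDerivAt_J_x1 hg0 0 t x₁ x₂).const_mul _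
      have hdR : HasDerivAt (fun y => u t y x₂) ar x₁ := by
        have h2 := Complex.reCLM.hasFDerivAt.comp_hasDerivAt x₁ hdC
        rw [har] at h2
        simpa [Function.comp_def] using h2
      rw [hdR.deriv, ← har]
    have hu_2 : ((deriv (fun w => u t x₁ w) x₂ : ℝ) : ℂ) = Z2 0 := by
      have hcoe : ∀ w, ((u t x₁ w : ℝ) : ℂ) = (1 / (2 * (π:ℂ))) * J h 0 t x₁ w := by
        intro w
        rw [hu, J_zero_real]
        push_cast
        ring
      obtain ⟨ar, har⟩ : ∃ ar : ℝ, Z2 0 = (ar : ℂ) := by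
        refine ⟨(1/(2*π)) * ∫ θ in (0:ℝ)..(2*π),
          opS h θ (t + x₁ * Real.cos θ + x₂ * Real.sin θ), ?_⟩
        show (1 / (2 * (π:ℂ))) * J (opS h) 0 t x₁ x₂ = _
        rw [J_zero_real]
        push_cast
        ring
      have hdC : HasDerivAt (fun w => ((u t x₁ w : ℝ) : ℂ)) (Z2 0) x₂ := by
        simp only [hcoe]
        exact (hasDerivAt_J_x2 hg0 0 t x₁ x₂).const_mul _
      have hdR : HasDerivAt (fun w => u t x₁ w) ar x₂ := by
        have h2 := Complex.reCLM.hasFDerivAt.comp_hasDerivAt x₂ hdC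
        rw [har] at h2
        simpa [Function.comp_def] using h2
      rw [hdR.deriv, ← har]
    -- key shift identities
    have hIK1 : ∀ k : ℤ, Z1 k - Complex.I * Z2 k = A (k+1) := by
      intro k
      show (1 / (2 * (π:ℂ))) * J (opC h) k t x₁ x₂
        - Complex.I * ((1 / (2 * (π:ℂ))) * J (opS h) k t x₁ x₂)
        = (1 / (2 * (π:ℂ))) * J (opT h) (k+1) t x₁ x₂
      linear_combination (1 / (2 * (π:ℂ))) * J_shift hg0 k t x₁ x₂
    have hIK2 : ∀ k : ℤ, Z1 k + Complex.I * Z2 k = A (k-1) := by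
      intro k
      show (1 / (2 * (π:ℂ))) * J (opC h) k t x₁ x₂
        + Complex.I * ((1 / (2 * (π:ℂ))) * J (opS h) k t x₁ x₂)
        = (1 / (2 * (π:ℂ))) * J (opT h) (k-1) t x₁ x₂
      linear_combination (1 / (2 * (π:ℂ))) * J_shift' hg0 k t x₁ x₂
    -- series algebra
    set SA : ℂ := ∑' n : ℕ, A ((n:ℤ)+1) * ω^(n+1) with hSAdef
    set SZ1 : ℂ := ∑' n : ℕ, Z1 ((n:ℤ)+1) * ω^(n+1) with hSZ1def
    set SZ2 : ℂ := ∑' n : ℕ, Z2 ((n:ℤ)+1) * ω^(n+1) with hSZ2def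
    have hSZdiff : SZ1 - Complex.I * SZ2 = ∑' n : ℕ, A ((n:ℤ)+2) * ω^(n+1) := by
      rw [hSZ1def, hSZ2def, ← tsum_mul_left, ← Summable.tsum_sub SZ1s (SZ2s.mul_left Complex.I)]
      apply tsum_congr
      intro n
      have hk := hIK1 ((n:ℤ)+1)
      have he : ((n:ℤ)+1)+1 = (n:ℤ)+2 := by ring
      rw [he] at hk
      linear_combination (ω^(n+1)) * hk
    have hSZsum : SZ1 + Complex.I * SZ2 = ∑' n : ℕ, A (n:ℤ) * ω^(n+1) := by
      rw [hSZ1def, hSZ2def, ← tsum_mul_left, ← Summable.tsum_add SZ1s (SZ2s.mul_left Complex.I)]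
      apply tsum_congr
      intro n
      have hk := hIK2 ((n:ℤ)+1)
      have he : ((n:ℤ)+1)-1 = (n:ℤ) := by ring
      rw [he] at hk
      linear_combination (ω^(n+1)) * hk
    have hSA_exp : SA = A 1 * ω + ω * ∑' n : ℕ, A ((n:ℤ)+2) * ω^(n+1) := by
      rw [hSAdef, Summable.tsum_eq_zero_add SAs]
      congr 1
      · norm_num
      · rw [← tsum_mul_left]
        apply tsum_congr
        intro n
        have hc1 : (((n+1:ℕ)):ℤ)+1 = (n:ℤ)+2 := by push_cast; ring
        rw [hc1]
        ring
    have hU_exp : (∑' n : ℕ, A (n:ℤ) * ω^(n+1)) = A 0 * ω + ω * SA := by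
      rw [Summable.tsum_eq_zero_add SUs, hSAdef]
      congr 1
      · norm_num
      · rw [← tsum_mul_left]
        apply tsum_congr
        intro n
        have hc1 : (((n+1:ℕ)):ℤ) = (n:ℤ)+1 := by push_cast; ring
        rw [hc1]
        ring
    have hZA1 : Z1 0 - Complex.I * Z2 0 = A 1 := by
      have := hIK1 0
      norm_num at this
      exact this
    have hZA2 : Z1 0 + Complex.I * Z2 0 = A (-1) := by
      have := hIK2 0
      norm_num at this
      exact this
    refine ⟨?_, ?_⟩
    · rw [hDt, hD1, hD2, hu_t, hu_1, hu_2]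
      linear_combination (-2 : ℂ)*hSA_exp + 2*ω*hZA1 + 2*ω*hSZdiff
    · rw [hDt, hD1, hD2, hu_t, hu_1, hu_2]
      linear_combination (2:ℂ)*hSZsum + 2*hU_exp
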